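/- Let X be a compact metric space, H₀ a real Hilbert space, and Φ : X → H₀ a continuous map. Then for every Borel probability measure μ on X and every ε > 0 there exist M ∈ ℕ, M ≥ 1, and a tuple x = (x₁,…,x_M) ∈ X^M such that ‖(1/M)∑_{m=1}^M Φ(x_m) − ∫_X Φ dμ‖ ≤ ε; that is, embeddings of empirical measures are dense in the image of the kernel mean embedding. -/

import Mathlib

open MeasureTheory

/-- Rational (equal-weight) approximation of a convex combination: given weights `w` on a
finite index type summing to 1 and vectors `v` bounded by `C`, for any `δ > 0` there are
`M ≥ 1` and counts `k i` with `∑ k = M` such that the equal-weight average with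
multiplicities `k` is `δ`-close to `∑ w i • v i`. -/
lemma exists_counts_approx {ι : Type} [Fintype ι] [Nonempty ι]
    {H₀ : Type*} [NormedAddCommGroup H₀] [NormedSpace ℝ H₀]
    (w : ι → ℝ) (hw₀ : ∀ i, 0 ≤ w i) (hw₁ : ∑ i, w i = 1)
    (v : ι → H₀) (C : ℝ) (hC : ∀ i, ‖v i‖ ≤ C)
    {δ : ℝ} (hδ : 0 < δ) :
    ∃ M : ℕ, 1 ≤ M ∧ ∃ k : ι → ℕ, ∑ i, k i = M ∧
      ‖(M : ℝ)⁻¹ • (∑ i, (k i : ℝ) • v i) - ∑ i, w i • v i‖ ≤ δ := by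
  classical
  obtain ⟨i₀⟩ := ‹Nonempty ι›
  have hC0 : 0 ≤ C := le_trans (norm_nonneg _) (hC i₀)
  set n : ℕ := Fintype.card ι with hn
  have hn1 : 1 ≤ n := Fintype.card_pos
  -- choose a large denominator N
  obtain ⟨N, hN⟩ := exists_nat_gt ((n : ℝ) * ((n : ℝ) * (C + 1)) / δ)
  have hNpos : 0 < N := by
    by_contra h
    push_neg at h
    interval_cases N
    have h1 : (0 : ℝ) < (n : ℝ) * ((n : ℝ) * (C + 1)) / δ := by
      apply div_pos _ hδ
      have hnpos : (0 : ℝ) < (n : ℝ) := by exact_mod_cast hn1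
      positivity
    simp at hN
    linarith
  have hNR : (0 : ℝ) < (N : ℝ) := by exact_mod_cast hNpos
  -- counts
  set S : ℕ := ∑ j ∈ Finset.univ.erase i₀, ⌊(N : ℝ) * w j⌋₊ with hS
  have hSle : S ≤ N := by
    have h1 : (S : ℝ) ≤ (N : ℝ) := by
      have h2 : (S : ℝ) = ∑ j ∈ Finset.univ.erase i₀, ((⌊(N : ℝ) * w j⌋₊ : ℝ)) := by
        push_cast [hS]; ring
      have h3 : ∀ j ∈ Finset.univ.erase i₀, ((⌊(N : ℝ) * w j⌋₊ : ℝ)) ≤ (N : ℝ) * w j :=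
        fun j _ => Nat.floor_le (mul_nonneg (le_of_lt hNR) (hw₀ j))
      have h4 : ∑ j ∈ Finset.univ.erase i₀, (N : ℝ) * w j ≤ (N : ℝ) := by
        have h5 : ∑ j ∈ Finset.univ.erase i₀, w j ≤ 1 := by
          have := Finset.sum_le_sum_of_subset_of_nonneg
            (Finset.erase_subset i₀ Finset.univ) (fun j _ _ => hw₀ j)
          simpa [hw₁] using this
        calc ∑ j ∈ Finset.univ.erase i₀, (N : ℝ) * w j
            = (N : ℝ) * ∑ j ∈ Finset.univ.erase i₀, w j := by rw [Finset.mul_sum]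
          _ ≤ (N : ℝ) * 1 := by
              exact mul_le_mul_of_nonneg_left h5 (le_of_lt hNR)
          _ = (N : ℝ) := by ring
      calc (S : ℝ) = ∑ j ∈ Finset.univ.erase i₀, ((⌊(N : ℝ) * w j⌋₊ : ℝ)) := h2
        _ ≤ ∑ j ∈ Finset.univ.erase i₀, (N : ℝ) * w j := Finset.sum_le_sum h3
        _ ≤ (N : ℝ) := h4
    exact_mod_cast h1
  set k : ι → ℕ := fun i => if i = i₀ then N - S else ⌊(N : ℝ) * w i⌋₊ with hk
  have hksum : ∑ i, k i = N := by
    rw [← Finset.add_sum_erase _ _ (Finset.mem_univ i₀)]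
    have h1 : ∑ j ∈ Finset.univ.erase i₀, k j = S := by
      apply Finset.sum_congr rfl
      intro j hj
      have : j ≠ i₀ := Finset.ne_of_mem_erase hj
      simp [hk, this]
    rw [h1]
    simp only [hk, if_pos rfl]
    omega
  -- bound each deviation
  have hdev : ∀ i, |(k i : ℝ) / N - w i| ≤ (n : ℝ) / N := by
    intro i
    by_cases hi : i = i₀
    · subst hi
      have hki : (k i : ℝ) = (N : ℝ) - (S : ℝ) := by
        simp only [hk, if_pos rfl]
        push_cast [Nat.cast_sub hSle]
        ring
      have hrw : (k i : ℝ) / N - w i = ∑ j ∈ Finset.univ.erase i, (w j - (⌊(N : ℝ) * w j⌋₊ : ℝ) / N) := by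
        have hw' : ∑ j ∈ Finset.univ.erase i, w j = 1 - w i := by
          have := Finset.add_sum_erase _ w (Finset.mem_univ i)
          rw [hw₁] at this
          linarith
        have hSr : (S : ℝ) = ∑ j ∈ Finset.univ.erase i, ((⌊(N : ℝ) * w j⌋₊ : ℝ)) := by
          push_cast [hS]; ring
        rw [Finset.sum_sub_distrib, hw', ← Finset.sum_div, ← hSr, hki]
        field_simp
        ring
      rw [hrw]
      have hterm : ∀ j ∈ Finset.univ.erase i, 0 ≤ w j - (⌊(N : ℝ) * w j⌋₊ : ℝ) / N := by
        intro j _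
        have := Nat.floor_le (mul_nonneg (le_of_lt hNR) (hw₀ j))
        rw [sub_nonneg, div_le_iff₀ hNR]
        linarith
      have hterm' : ∀ j ∈ Finset.univ.erase i, w j - (⌊(N : ℝ) * w j⌋₊ : ℝ) / N ≤ 1 / N := by
        intro j _
        have := Nat.sub_one_lt_floor ((N : ℝ) * w j)
        rw [sub_le_iff_le_add, ← add_div, le_div_iff₀ hNR]
        nlinarith
      rw [abs_of_nonneg (Finset.sum_nonneg hterm)]
      calc ∑ j ∈ Finset.univ.erase i, (w j - (⌊(N : ℝ) * w j⌋₊ : ℝ) / N)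
          ≤ ∑ _j ∈ Finset.univ.erase i, (1 : ℝ) / N := Finset.sum_le_sum hterm'
        _ = ((Finset.univ.erase i).card : ℝ) / N := by
            rw [Finset.sum_const, nsmul_eq_mul]; ring
        _ ≤ (n : ℝ) / N := by
            have hcard : ((Finset.univ.erase i).card : ℝ) ≤ (n : ℝ) := by
              have := Finset.card_le_card (Finset.erase_subset i (Finset.univ : Finset ι))
              simp only [Finset.card_univ] at this
              exact_mod_cast this
            gcongr
    · have hki : (k i : ℝ) = (⌊(N : ℝ) * w i⌋₊ : ℝ) := by simp [hk, hi]
      have hfl := Nat.sub_one_lt_floor ((N : ℝ) * w i)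
      have hfl2 := Nat.floor_le (mul_nonneg (le_of_lt hNR) (hw₀ i))
      have hn1' : (1 : ℝ) ≤ (n : ℝ) := by exact_mod_cast hn1
      have h1 : (⌊(N : ℝ) * w i⌋₊ : ℝ) / N ≤ w i := by
        rw [div_le_iff₀ hNR]; linarith
      have h2 : w i - (⌊(N : ℝ) * w i⌋₊ : ℝ) / N ≤ (n : ℝ) / N := by
        rw [sub_le_iff_le_add, ← add_div, le_div_iff₀ hNR]
        nlinarith
      have h3 : (0:ℝ) ≤ (n : ℝ) / N := by positivity
      rw [hki, abs_le]
      constructor <;> linarith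
  -- final norm bound
  refine ⟨N, hNpos, k, hksum, ?_⟩
  have hrw : (N : ℝ)⁻¹ • (∑ i, (k i : ℝ) • v i) - ∑ i, w i • v i
      = ∑ i, ((k i : ℝ) / N - w i) • v i := by
    rw [Finset.smul_sum, ← Finset.sum_sub_distrib]
    apply Finset.sum_congr rfl
    intro i _
    rw [sub_smul, smul_smul]
    congr 2
    field_simp
  rw [hrw]
  calc ‖∑ i, ((k i : ℝ) / N - w i) • v i‖
      ≤ ∑ i, ‖((k i : ℝ) / N - w i) • v i‖ := norm_sum_le _ _
    _ ≤ ∑ _i : ι, ((n : ℝ) / N) * C := by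
        apply Finset.sum_le_sum
        intro i _
        rw [norm_smul, Real.norm_eq_abs]
        exact mul_le_mul (hdev i) (hC i) (norm_nonneg _) (by positivity)
    _ = (n : ℝ) * ((n : ℝ) / N * C) := by
        rw [Finset.sum_const, nsmul_eq_mul]; simp [hn]
    _ ≤ δ := by
        rw [div_lt_iff₀ hδ] at hN
        have hnpos : (0 : ℝ) < (n : ℝ) := by exact_mod_cast hn1
        rw [show (n : ℝ) * ((n : ℝ) / N * C) = (n : ℝ) * ((n : ℝ) * C) / N from by ring,
          div_le_iff₀ hNR]
        nlinarith

/-- On a compact metric space `X`, for continuous `Φ : X → H₀`, embeddings of empirical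
measures are dense in the image of the kernel mean embedding: for every Borel probability
measure `μ` on `X` and every `ε > 0` there are `M ≥ 1` and a tuple `x ∈ X^M` with
`‖(1/M) ∑ m, Φ (x m) - ∫ Φ dμ‖ ≤ ε`. -/
theorem empirical_embeddings_dense
    {X : Type*} [MetricSpace X] [CompactSpace X] [MeasurableSpace X] [BorelSpace X]
    {H₀ : Type*} [NormedAddCommGroup H₀] [InnerProductSpace ℝ H₀] [CompleteSpace H₀]
    (Φ : X → H₀) (hΦ : Continuous Φ) :
    ∀ (μ : Measure X), IsProbabilityMeasure μ → ∀ ε : ℝ, 0 < ε →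
      ∃ M : ℕ, 1 ≤ M ∧ ∃ x : Fin M → X,
        ‖(M : ℝ)⁻¹ • (∑ m : Fin M, Φ (x m)) - ∫ y, Φ y ∂μ‖ ≤ ε := by
  intro μ hμ ε hε
  classical
  -- X is nonempty
  have hXne : Nonempty X := by
    by_contra h
    have : μ Set.univ = 0 := by
      have : (Set.univ : Set X) = ∅ := by
        simp [Set.eq_empty_iff_forall_notMem]
        intro x; exact h ⟨x⟩
      simp [this]
    rw [measure_univ] at this
    exact one_ne_zero this
  -- boundedness
  obtain ⟨x₀⟩ := hXne
  obtain ⟨C, hCb⟩ : ∃ C, ∀ x : X, ‖Φ x‖ ≤ C := by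
    obtain ⟨C, hC⟩ := (isCompact_range hΦ).exists_bound_of_continuousOn continuousOn_id
    exact ⟨C, fun x => by simpa using hC (Φ x) (Set.mem_range_self x)⟩
  -- integrability
  have hint : Integrable Φ μ := by
    refine Integrable.mono' (integrable_const C) hΦ.aestronglyMeasurable ?_
    exact Filter.Eventually.of_forall hCb
  -- the integral is in the closed convex hull of the range of Φ
  have hmem : (∫ y, Φ y ∂μ) ∈ closure (convexHull ℝ (Set.range Φ)) := by
    apply Convex.integral_mem ((convex_convexHull ℝ _).closure) isClosed_closure
      (Filter.Eventually.of_forall fun x => subset_closure (subset_convexHull ℝ _ (Set.mem_range_self x)))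
      hint
  -- pick a point of the convex hull close to the integral
  obtain ⟨y, hy, hyd⟩ : ∃ y ∈ convexHull ℝ (Set.range Φ), dist (∫ z, Φ z ∂μ) y < ε / 2 :=
    Metric.mem_closure_iff.mp hmem (ε / 2) (by linarith)
  rw [mem_convexHull_iff_exists_fintype] at hy
  obtain ⟨ι, hfin, w, z, hw₀, hw₁, hz, hzy⟩ := hy
  choose p hp using hz
  have hιne : Nonempty ι := by
    by_contra h
    rw [not_nonempty_iff] at h
    rw [Finset.univ_eq_empty, Finset.sum_empty] at hw₁
    exact zero_ne_one hw₁
  -- rational approximation of the convex combination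
  obtain ⟨M, hM1, k, hksum, hkb⟩ := exists_counts_approx w hw₀ hw₁ (fun i => Φ (p i)) C
    (fun i => hCb _) (show (0:ℝ) < ε / 2 by linarith)
  -- build the tuple
  have hcard : Fintype.card (Σ i, Fin (k i)) = M := by
    simp [Fintype.card_sigma, hksum]
  let e : (Σ i, Fin (k i)) ≃ Fin M := Fintype.equivFinOfCardEq hcard
  refine ⟨M, hM1, fun m => p (e.symm m).1, ?_⟩
  have hsum : ∑ m : Fin M, Φ (p (e.symm m).1) = ∑ i, (k i : ℝ) • Φ (p i) := by
    rw [Equiv.sum_comp e.symm (fun q : Σ i, Fin (k i) => Φ (p q.1))]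
    rw [← Finset.univ_sigma_univ, Finset.sum_sigma]
    apply Finset.sum_congr rfl
    intro i _
    simp [← Nat.cast_smul_eq_nsmul ℝ]
  rw [hsum]
  have hzy' : ∑ i, w i • Φ (p i) = y := by
    rw [← hzy]
    exact Finset.sum_congr rfl fun i _ => by rw [hp]
  calc ‖(M : ℝ)⁻¹ • (∑ i, (k i : ℝ) • Φ (p i)) - ∫ y, Φ y ∂μ‖
      ≤ ‖(M : ℝ)⁻¹ • (∑ i, (k i : ℝ) • Φ (p i)) - ∑ i, w i • Φ (p i)‖
        + ‖∑ i, w i • Φ (p i) - ∫ y, Φ y ∂μ‖ := norm_sub_le_norm_sub_add_norm_sub _ _ _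
    _ ≤ ε / 2 + ε / 2 := by
        apply add_le_add hkb
        rw [hzy', ← dist_eq_norm, dist_comm]
        exact le_of_lt hyd
    _ = ε := by ring
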